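/- Let n ≥ 2 and 0 < ε < 1. Applying the generalized BS protocol to two independent copies of P_{n,ε} = ε·P_n^PR + (1−ε)·P_n^c produces the box P_{n,ε'} with ε' = (ε/2^{n−1})·(2^{n−1} + 1 − ε). -/
import Mathlib


/-- The n-partite PR box: uniform over outputs with XOR of outputs = AND of inputs. -/
noncomputable def PRbox (n : ℕ) (a x : Fin n → ZMod 2) : ℝ :=
  if (∑ i, a i) = (∏ i, x i) then (2:ℝ) ^ (-((n:ℤ) - 1)) else 0

/-- The even-parity box: uniform over outputs with XOR of outputs = 0. -/
noncomputable def Cbox (n : ℕ) (a x : Fin n → ZMod 2) : ℝ :=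
  if (∑ i, a i) = 0 then (2:ℝ) ^ (-((n:ℤ) - 1)) else 0

/-- The correlated non-local box P_{n,ε} = ε·P^PR + (1-ε)·P^c. -/
noncomputable def CNLbox (n : ℕ) (ε : ℝ) (a x : Fin n → ZMod 2) : ℝ :=
  ε * PRbox n a x + (1 - ε) * Cbox n a x

/-- The generalized BS wiring: y_i = x_i·(1 - a_i), c_i = a_i ⊕ b_i. -/
noncomputable def wire (n : ℕ) (P Q : (Fin n → ZMod 2) → (Fin n → ZMod 2) → ℝ)
    (c x : Fin n → ZMod 2) : ℝ :=
  ∑ a : Fin n → ZMod 2, P a x * Q (fun i => c i + a i) (fun i => x i * (1 + a i))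

open Finset

lemma zmod2_cases (u : ZMod 2) : u = 0 ∨ u = 1 := by revert u; decide

lemma zmod2_add_eq_zero (u v : ZMod 2) : (u + v = 0) ↔ (v = u) := by revert u v; decide

lemma prod_one_add {n : ℕ} (a : Fin n → ZMod 2) :
    ∏ i, (1 + a i) = if a = 0 then 1 else 0 := by
  by_cases h : a = 0
  · simp [h]
  · obtain ⟨i, hi⟩ : ∃ i, a i ≠ 0 := by
      by_contra hc; push_neg at hc; exact h (funext fun i => hc i)
    have h0 : (1 : ZMod 2) + a i = 0 := by
      rcases zmod2_cases (a i) with h' | h'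
      · exact absurd h' hi
      · rw [h']; decide
    rw [if_neg h]
    exact Finset.prod_eq_zero (mem_univ i) h0

lemma fiber_card (n : ℕ) (hn : 1 ≤ n) (t : ZMod 2) :
    (univ.filter fun a : Fin n → ZMod 2 => ∑ i, a i = t).card = 2 ^ (n - 1) := by
  have key : ∀ u : ZMod 2, (univ.filter fun a : Fin n → ZMod 2 => ∑ i, a i = u).card
      = (univ.filter fun a : Fin n → ZMod 2 => ∑ i, a i = 0).card := by
    intro u
    set j : Fin n := ⟨0, hn⟩ with hj
    set v : Fin n → ZMod 2 := fun i => if i = j then u else 0 with hv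
    have hsv : ∑ i, v i = u := by simp [hv]
    have hself : ∀ w : ZMod 2, w + w = 0 := by decide
    apply Finset.card_bij' (fun a _ => a + v) (fun b _ => b + v)
    · intro a ha
      simp only [mem_filter, mem_univ, true_and] at ha ⊢
      simp [Finset.sum_add_distrib, hsv, ha, hself]
    · intro b hb
      simp only [mem_filter, mem_univ, true_and] at hb ⊢
      simp [Finset.sum_add_distrib, hsv, hb]
    · intro a _; funext i; simp only [Pi.add_apply]; rw [add_assoc, hself, add_zero]
    · intro b _; funext i; simp only [Pi.add_apply]; rw [add_assoc, hself, add_zero]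
  have hiff : ∀ u : ZMod 2, (¬ u = 0) ↔ u = 1 := by decide
  have htot : (univ.filter fun a : Fin n → ZMod 2 => ∑ i, a i = 0).card
      + (univ.filter fun a : Fin n → ZMod 2 => ¬ (∑ i, a i = 0)).card = 2 ^ n := by
    rw [Finset.card_filter_add_card_filter_not]
    simp [Finset.card_univ]
  have hone : (univ.filter fun a : Fin n → ZMod 2 => ¬ (∑ i, a i = 0)).card
      = (univ.filter fun a : Fin n → ZMod 2 => ∑ i, a i = 0).card := by
    rw [Finset.filter_congr (fun a (_ : a ∈ univ) => hiff (∑ i, a i))]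
    exact key 1
  have hpow : 2 ^ n = 2 * 2 ^ (n - 1) := by
    rw [← pow_succ']
    congr 1
    exact (Nat.succ_pred_eq_of_pos hn).symm
  rw [key t]
  have h2 : 2 * (univ.filter fun a : Fin n → ZMod 2 => ∑ i, a i = 0).card
      = 2 * 2 ^ (n - 1) := by
    rw [← hpow, ← htot, hone]; ring
  exact Nat.eq_of_mul_eq_mul_left two_pos h2

lemma sum_fiber (n : ℕ) (hn : 1 ≤ n) (G : ZMod 2 → ℝ) :
    ∑ a : Fin n → ZMod 2, G (∑ i, a i) = 2 ^ (n - 1) * (G 0 + G 1) := by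
  rw [← Finset.sum_filter_add_sum_filter_not univ (fun a : Fin n → ZMod 2 => ∑ i, a i = 0)]
  have h1 : ∑ a ∈ univ.filter (fun a : Fin n → ZMod 2 => ∑ i, a i = 0), G (∑ i, a i)
      = 2 ^ (n - 1) * G 0 := by
    rw [Finset.sum_congr rfl (fun a ha => by rw [(mem_filter.mp ha).2]), Finset.sum_const,
      fiber_card n hn 0]
    push_cast [nsmul_eq_mul]
    ring
  have hiff : ∀ u : ZMod 2, (¬ u = 0) ↔ u = 1 := by decide
  have h2 : ∑ a ∈ univ.filter (fun a : Fin n → ZMod 2 => ¬ (∑ i, a i = 0)), G (∑ i, a i)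
      = 2 ^ (n - 1) * G 1 := by
    rw [Finset.filter_congr (fun a (_ : a ∈ univ) => hiff (∑ i, a i))]
    rw [Finset.sum_congr rfl (fun a ha => by rw [(mem_filter.mp ha).2]), Finset.sum_const,
      fiber_card n hn 1]
    push_cast [nsmul_eq_mul]
    ring
  rw [h1, h2]; ring

theorem bs_protocol_on_correlated_boxes (n : ℕ) (hn : 2 ≤ n)
    (ε : ℝ) (h0 : 0 < ε) (h1 : ε < 1) :
    ∀ c x, wire n (CNLbox n ε) (CNLbox n ε) c x
      = CNLbox n (ε / 2 ^ (n - 1) * (2 ^ (n - 1) + 1 - ε)) c x := by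
  intro c x
  have hn1 : 1 ≤ n := le_trans one_le_two hn
  have hN0 : ((2:ℝ) ^ (n - 1)) ≠ 0 := by positivity
  have hwN : (2:ℝ) ^ (-((n:ℤ) - 1)) = ((2:ℝ) ^ (n - 1))⁻¹ := by
    rw [← zpow_natCast (2:ℝ) (n - 1), ← zpow_neg]
    congr 1
    push_cast [Nat.cast_sub hn1]
    ring
  set G : ZMod 2 → ℝ := fun t =>
    (((2:ℝ) ^ (n - 1))⁻¹)^2 * ((ε * (if t = ∏ i, x i then 1 else 0)
      + (1 - ε) * (if t = 0 then 1 else 0)) * (if t = ∑ i, c i then 1 else 0)) with hGdef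
  set D : ℝ := (((2:ℝ) ^ (n - 1))⁻¹)^2
      * ((ε * (if (0:ZMod 2) = ∏ i, x i then 1 else 0) + (1 - ε))
      * (ε * (if ∑ i, c i = ∏ i, x i then 1 else 0)
        + (1 - ε) * (if ∑ i, c i = 0 then 1 else 0))) - G 0 with hDdef
  have hbody : ∀ a : Fin n → ZMod 2,
      CNLbox n ε a x * CNLbox n ε (fun i => c i + a i) (fun i => x i * (1 + a i))
      = (if a = 0 then D else 0) + G (∑ i, a i) := by
    intro a
    by_cases ha : a = 0
    · subst ha
      simp only [if_pos rfl, CNLbox, PRbox, Cbox, Pi.zero_apply, add_zero, mul_one,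
        Finset.sum_const_zero, hwN, hDdef, hGdef]
      split_ifs <;> first | ring | simp_all
    · simp only [if_neg ha, zero_add, CNLbox, PRbox, Cbox, hwN, hGdef,
        Finset.sum_add_distrib, Finset.prod_mul_distrib, prod_one_add, if_neg ha,
        mul_zero, zmod2_add_eq_zero]
      split_ifs <;> first | ring | simp_all
  have hw1 : wire n (CNLbox n ε) (CNLbox n ε) c x
      = D + 2 ^ (n - 1) * (G 0 + G 1) := by
    simp only [wire]
    rw [Finset.sum_congr rfl (fun a _ => hbody a), Finset.sum_add_distrib,
      sum_fiber n hn1 G]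
    simp [Finset.sum_ite_eq']
  rw [hw1]
  simp only [CNLbox, PRbox, Cbox, hwN, hGdef, hDdef]
  rcases zmod2_cases (∏ i, x i) with hp | hp <;>
    rcases zmod2_cases (∑ i, c i) with hs | hs <;>
      simp only [hp, hs] <;> norm_num <;> field_simp <;> ring
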